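/- Let s: [0,1) → ℝ^N be measurable with ‖s(u)‖ = r for all u (r > 0), and fix θ ∈ (0, π/2). Then there exists a unit vector g ∈ ℝ^N such that the Lebesgue measure of {u ∈ [0,1) : ⟨s(u), g⟩ ≥ r·cos θ} is at least A_N(θ)/A_N(π), where A_N(θ) is the surface area of a spherical cap of half-angle θ on the unit sphere in ℝ^N and A_N(π) is the total surface area of the sphere. -/

import Mathlib

open MeasureTheory Set Metric Real Pointwise ENNReal NNReal

variable {N : ℕ}

lemma cone_eq (c : ℝ) (v : EuclideanSpace ℝ (Fin N)) :
    Ioo (0:ℝ) 1 • (Subtype.val '' {x : Metric.sphere (0 : EuclideanSpace ℝ (Fin N)) 1 |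
        c ≤ inner ℝ (x : EuclideanSpace ℝ (Fin N)) v}) =
    {x : EuclideanSpace ℝ (Fin N) | x ≠ 0 ∧ ‖x‖ < 1 ∧ c * ‖x‖ ≤ inner ℝ x v} := by
  ext x
  rw [Set.mem_smul]
  constructor
  · rintro ⟨t, ht, z, ⟨y, hy, rfl⟩, rfl⟩
    have hy1 : ‖(y : EuclideanSpace ℝ (Fin N))‖ = 1 := norm_eq_of_mem_sphere y
    have ht0 : (0:ℝ) < t := ht.1
    have hn : ‖t • (y : EuclideanSpace ℝ (Fin N))‖ = t := by
      rw [norm_smul, hy1, mul_one, Real.norm_eq_abs, abs_of_pos ht0]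
    refine ⟨?_, ?_, ?_⟩
    · exact smul_ne_zero (ne_of_gt ht0) (by simp [← norm_pos_iff, hy1])
    · rw [hn]; exact ht.2
    · rw [hn, real_inner_smul_left, mul_comm c t]
      exact mul_le_mul_of_nonneg_left hy ht0.le
  · rintro ⟨hx0, hlt, hin⟩
    have hxpos : (0:ℝ) < ‖x‖ := norm_pos_iff.2 hx0
    have hysph : ‖x‖⁻¹ • x ∈ Metric.sphere (0 : EuclideanSpace ℝ (Fin N)) 1 := by
      simp [mem_sphere_iff_norm, norm_smul, abs_of_pos (inv_pos.2 hxpos),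
        inv_mul_cancel₀ hxpos.ne']
    have hycap : c ≤ inner ℝ (‖x‖⁻¹ • x) v := by
      rw [real_inner_smul_left]
      have h2 := mul_le_mul_of_nonneg_left hin (inv_pos.2 hxpos).le
      calc c = ‖x‖⁻¹ * (c * ‖x‖) := by field_simp
        _ ≤ ‖x‖⁻¹ * inner ℝ x v := h2
    refine ⟨‖x‖, ⟨hxpos, hlt⟩, ‖x‖⁻¹ • x, ⟨⟨‖x‖⁻¹ • x, hysph⟩, hycap, rfl⟩, ?_⟩
    rw [smul_smul, mul_inv_cancel₀ hxpos.ne', one_smul]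

lemma cap_meas (c : ℝ) (v : EuclideanSpace ℝ (Fin N)) :
    MeasurableSet {x : Metric.sphere (0 : EuclideanSpace ℝ (Fin N)) 1 |
        c ≤ inner ℝ (x : EuclideanSpace ℝ (Fin N)) v} :=
  measurableSet_le measurable_const
    ((continuous_subtype_val.inner continuous_const).measurable)

lemma cap_invariant (c : ℝ) (v e : EuclideanSpace ℝ (Fin N)) (hv : ‖v‖ = 1) (he : ‖e‖ = 1) :
    (volume : Measure (EuclideanSpace ℝ (Fin N))).toSphere
        {x : Metric.sphere (0 : EuclideanSpace ℝ (Fin N)) 1 |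
          c ≤ inner ℝ (x : EuclideanSpace ℝ (Fin N)) v} =
      (volume : Measure (EuclideanSpace ℝ (Fin N))).toSphere
        {x : Metric.sphere (0 : EuclideanSpace ℝ (Fin N)) 1 |
          c ≤ inner ℝ (x : EuclideanSpace ℝ (Fin N)) e} := by
  rw [Measure.toSphere_apply' _ (cap_meas c v), Measure.toSphere_apply' _ (cap_meas c e),
    cone_eq, cone_eq]
  set f : EuclideanSpace ℝ (Fin N) ≃ₗᵢ[ℝ] EuclideanSpace ℝ (Fin N) :=
    Submodule.reflection (ℝ ∙ (e - v))ᗮ with hf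
  have hfe : f e = v := Submodule.reflection_sub (by rw [he, hv])
  have hfv : f v = e := by
    have := Submodule.reflection_reflection (ℝ ∙ (e - v))ᗮ e
    rw [hfe] at this; exact this
  have hDm : MeasurableSet {x : EuclideanSpace ℝ (Fin N) | x ≠ 0 ∧ ‖x‖ < 1 ∧ c * ‖x‖ ≤ inner ℝ x e} :=
    (measurableSet_singleton (0 : EuclideanSpace ℝ (Fin N))).compl.inter
      ((measurableSet_lt measurable_norm measurable_const).inter
        (measurableSet_le (measurable_norm.const_mul c)
          ((continuous_id.inner continuous_const).measurable)))
  have hpre : f ⁻¹' {x : EuclideanSpace ℝ (Fin N) | x ≠ 0 ∧ ‖x‖ < 1 ∧ c * ‖x‖ ≤ inner ℝ x e} =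
      {x : EuclideanSpace ℝ (Fin N) | x ≠ 0 ∧ ‖x‖ < 1 ∧ c * ‖x‖ ≤ inner ℝ x v} := by
    ext x
    simp only [Set.mem_preimage, Set.mem_setOf_eq, f.norm_map, ne_eq,
      LinearIsometryEquiv.map_eq_zero_iff]
    have h1 : (inner ℝ (f x) e : ℝ) = inner ℝ x v := by
      conv_lhs => rw [← hfv]
      exact f.inner_map_map x v
    rw [h1]
  congr 1
  rw [← hpre]
  exact (f.measurePreserving.measure_preimage hDm.nullMeasurableSet)

theorem measuring_argument (N : ℕ) (hN : 0 < N) (r : ℝ) (hr : 0 < r)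
    (s : ℝ → EuclideanSpace ℝ (Fin N)) (hs : Measurable s)
    (hnorm : ∀ u ∈ Set.Ico (0:ℝ) 1, ‖s u‖ = r)
    (θ : ℝ) (hθ : θ ∈ Set.Ioo 0 (π / 2))
    (e : EuclideanSpace ℝ (Fin N)) (he : ‖e‖ = 1)
    (σ : Measure (Metric.sphere (0 : EuclideanSpace ℝ (Fin N)) 1))
    (hσ : σ = (volume : Measure (EuclideanSpace ℝ (Fin N))).toSphere) :
    ∃ g : EuclideanSpace ℝ (Fin N), ‖g‖ = 1 ∧
      (σ {x : Metric.sphere (0 : EuclideanSpace ℝ (Fin N)) 1 |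
          Real.cos θ ≤ inner ℝ (x : EuclideanSpace ℝ (Fin N)) e}) /
        (σ (Set.univ : Set (Metric.sphere (0 : EuclideanSpace ℝ (Fin N)) 1))) ≤
      volume {u ∈ Set.Ico (0:ℝ) 1 | r * Real.cos θ ≤ inner ℝ (s u) g} := by
  subst hσ
  set c := Real.cos θ with hc
  set σ := (volume : Measure (EuclideanSpace ℝ (Fin N))).toSphere with hσ'
  set μ₁ := (volume : Measure ℝ).restrict (Set.Ico (0:ℝ) 1) with hμ₁
  set f : Metric.sphere (0 : EuclideanSpace ℝ (Fin N)) 1 → ℝ≥0∞ :=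
    fun x => volume {u ∈ Set.Ico (0:ℝ) 1 | r * c ≤ inner ℝ (s u) (x : EuclideanSpace ℝ (Fin N))}
    with hf
  set A : Set (ℝ × Metric.sphere (0 : EuclideanSpace ℝ (Fin N)) 1) := {p | r * c ≤ inner ℝ (s p.1) ((p.2 : EuclideanSpace ℝ (Fin N)))} with hA
  have hAm : MeasurableSet A :=
    measurableSet_le measurable_const
      ((hs.comp measurable_fst).inner (continuous_subtype_val.measurable.comp measurable_snd))
  have hsec : ∀ x : Metric.sphere (0 : EuclideanSpace ℝ (Fin N)) 1, f x = ∫⁻ u, A.indicator 1 (u, x) ∂μ₁ := by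
    intro x
    have hux : MeasurableSet {u : ℝ | r * c ≤ inner ℝ (s u) (x : EuclideanSpace ℝ (Fin N))} :=
      measurableSet_le measurable_const (hs.inner measurable_const)
    have h1 : f x = μ₁ {u : ℝ | r * c ≤ inner ℝ (s u) (x : EuclideanSpace ℝ (Fin N))} := by
      have hseteq : {u ∈ Set.Ico (0:ℝ) 1 | r * c ≤ inner ℝ (s u) (x : EuclideanSpace ℝ (Fin N))} =
          {u : ℝ | r * c ≤ inner ℝ (s u) (x : EuclideanSpace ℝ (Fin N))} ∩ Set.Ico (0:ℝ) 1 := by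
        ext u
        simp only [Set.mem_setOf_eq, Set.mem_inter_iff, Set.mem_sep_iff]
        tauto
      rw [hμ₁, Measure.restrict_apply hux, ← hseteq]
    rw [h1, ← lintegral_indicator_one hux]
    refine lintegral_congr fun u => ?_
    simp only [Set.indicator_apply, Set.mem_setOf_eq, hA, Pi.one_apply]
  have hswap : ∫⁻ x, f x ∂σ = ∫⁻ u, (σ {x : Metric.sphere (0 : EuclideanSpace ℝ (Fin N)) 1 | r * c ≤ inner ℝ (s u) (x : EuclideanSpace ℝ (Fin N))}) ∂μ₁ := by
    calc ∫⁻ x, f x ∂σ = ∫⁻ x, ∫⁻ u, A.indicator 1 (u, x) ∂μ₁ ∂σ := by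
          exact lintegral_congr hsec
      _ = ∫⁻ u, ∫⁻ x, A.indicator 1 (u, x) ∂σ ∂μ₁ := by
          refine lintegral_lintegral_swap ?_
          exact ((measurable_one.indicator hAm).comp measurable_swap).aemeasurable
      _ = ∫⁻ u, (σ {x : Metric.sphere (0 : EuclideanSpace ℝ (Fin N)) 1 | r * c ≤ inner ℝ (s u) (x : EuclideanSpace ℝ (Fin N))}) ∂μ₁ := by
          refine lintegral_congr fun u => ?_
          have hxm : MeasurableSet {x : Metric.sphere (0 : EuclideanSpace ℝ (Fin N)) 1 | r * c ≤ inner ℝ (s u) (x : EuclideanSpace ℝ (Fin N))} :=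
            measurableSet_le measurable_const
              ((continuous_const.inner continuous_subtype_val).measurable)
          rw [← lintegral_indicator_one hxm]
          refine lintegral_congr fun x => ?_
          simp only [Set.indicator_apply, Set.mem_setOf_eq, hA, Pi.one_apply]
  have hcapval : ∀ u ∈ Set.Ico (0:ℝ) 1,
      σ {x : Metric.sphere (0 : EuclideanSpace ℝ (Fin N)) 1 | r * c ≤ inner ℝ (s u) (x : EuclideanSpace ℝ (Fin N))} =
        σ {x : Metric.sphere (0 : EuclideanSpace ℝ (Fin N)) 1 | c ≤ inner ℝ (x : EuclideanSpace ℝ (Fin N)) e} := by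
    intro u hu
    have hru : ‖s u‖ = r := hnorm u hu
    set v : EuclideanSpace ℝ (Fin N) := r⁻¹ • s u with hv
    have hv1 : ‖v‖ = 1 := by
      rw [hv, norm_smul, Real.norm_eq_abs, abs_of_pos (inv_pos.2 hr), hru,
        inv_mul_cancel₀ hr.ne']
    have hset : {x : Metric.sphere (0 : EuclideanSpace ℝ (Fin N)) 1 | r * c ≤ inner ℝ (s u) (x : EuclideanSpace ℝ (Fin N))} =
        {x : Metric.sphere (0 : EuclideanSpace ℝ (Fin N)) 1 | c ≤ inner ℝ (x : EuclideanSpace ℝ (Fin N)) v} := by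
      have hsu : s u = r • v := by rw [hv, smul_smul, mul_inv_cancel₀ hr.ne', one_smul]
      ext x
      simp only [Set.mem_setOf_eq]
      rw [hsu, real_inner_smul_left, mul_le_mul_iff_right₀ hr, real_inner_comm]
    rw [hset]
    exact cap_invariant c v e hv1 he
  have hIco : μ₁ Set.univ = 1 := by
    rw [hμ₁, Measure.restrict_apply_univ, Real.volume_Ico]
    simp
  have key : ∫⁻ x, f x ∂σ = σ {x : Metric.sphere (0 : EuclideanSpace ℝ (Fin N)) 1 | c ≤ inner ℝ (x : EuclideanSpace ℝ (Fin N)) e} := by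
    rw [hswap, hμ₁]
    rw [setLIntegral_congr_fun measurableSet_Ico
      hcapval]
    rw [setLIntegral_const, Real.volume_Ico]
    simp
  have hne : σ ≠ 0 := by
    rw [← Measure.measure_univ_ne_zero, hσ', Measure.toSphere_apply_univ]
    refine mul_ne_zero ?_ (measure_ball_pos volume (0 : EuclideanSpace ℝ (Fin N)) one_pos).ne'
    simp [finrank_euclideanSpace_fin, hN.ne']
  have hfin : ∫⁻ x, f x ∂σ ≠ ∞ := by rw [key]; exact measure_ne_top _ _
  obtain ⟨x, hx⟩ := exists_laverage_le hne hfin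
  rw [laverage_eq] at hx
  refine ⟨(x : EuclideanSpace ℝ (Fin N)), norm_eq_of_mem_sphere x, ?_⟩
  calc σ {y : Metric.sphere (0 : EuclideanSpace ℝ (Fin N)) 1 | c ≤ inner ℝ (y : EuclideanSpace ℝ (Fin N)) e} / σ Set.univ
      = (∫⁻ y, f y ∂σ) / σ Set.univ := by rw [key]
    _ ≤ f x := hx
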